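/- If $X \subseteq \binom{[n]}{k}$ is the set of bases of a matroid of rank $k$ on $[n]$, then any linear extension of the Gale order on $X$ is a shelling order of the associated pure $(k-1)$-dimensional simplicial complex. -/

import Mathlib

/-- Increasing enumeration of a finite set of naturals. -/
def sortedL (x : Finset ℕ) : List ℕ := x.sort (· ≤ ·)

/-- The Gale (Bruhat) order on finite subsets of ℕ: componentwise comparison of
the increasing enumerations. -/
def GaleLE (x y : Finset ℕ) : Prop :=
  ∀ i (hx : i < (sortedL x).length) (hy : i < (sortedL y).length),
    (sortedL x).get ⟨i, hx⟩ ≤ (sortedL y).get ⟨i, hy⟩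

def GaleLT (x y : Finset ℕ) : Prop := GaleLE x y ∧ x ≠ y

/-- `C` is a shelling order: for all `i < j` there is `z < j` with
`|C z ∩ C j| = k - 1` and `C i ∩ C j ⊆ C z ∩ C j`. -/
def IsShellingOrder (k : ℕ) {h : ℕ} (C : Fin h → Finset ℕ) : Prop :=
  ∀ i j : Fin h, i < j → ∃ z : Fin h, z < j ∧
    ((C z ∩ C j).card = k - 1 ∧ C i ∩ C j ⊆ C z ∩ C j)


/-- The (basis) exchange property. -/
def ExchangeProp (X : Set (Finset ℕ)) : Prop :=
  ∀ A ∈ X, ∀ B ∈ X, ∀ a ∈ A \ B, ∃ b ∈ B \ A, (A \ {a}) ∪ {b} ∈ X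

lemma card_filter_sortedL (x : Finset ℕ) (m : ℕ) :
    (x.filter (· ≤ m)).card = ((sortedL x).filter (fun e => decide (e ≤ m))).length := by
  have h : ((sortedL x : Multiset ℕ)) = x.val := Finset.sort_eq _ _
  have : (x.filter (· ≤ m)).card = Multiset.card (Multiset.filter (· ≤ m) x.val) := rfl
  rw [this, ← h]
  rfl

lemma get_le_of_count (l : List ℕ) (hl : l.Pairwise (· ≤ ·)) (i : ℕ) (hi : i < l.length) (m : ℕ)
    (h : i + 1 ≤ (l.filter (fun e => decide (e ≤ m))).length) : l.get ⟨i, hi⟩ ≤ m := by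
  by_contra hgt
  push_neg at hgt
  have hsplit : l = l.take i ++ l.drop i := (List.take_append_drop _ _).symm
  have hnil : (l.drop i).filter (fun e => decide (e ≤ m)) = [] := by
    rw [List.filter_eq_nil_iff]
    intro a ha
    simp only [decide_eq_true_eq]
    obtain ⟨⟨j, hj⟩, rfl⟩ := List.mem_iff_get.mp ha
    have hij : i + j < l.length := by have h2 := hj; simp [List.length_drop] at h2; omega
    have h1 : (l.drop i).get ⟨j, hj⟩ = l.get ⟨i + j, hij⟩ := by
      simp [List.get_eq_getElem, List.getElem_drop]
    rw [h1]
    have : l.get ⟨i, hi⟩ ≤ l.get ⟨i + j, hij⟩ :=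
      hl.rel_get_of_le (by simp : (⟨i, hi⟩ : Fin l.length) ≤ ⟨i + j, hij⟩)
    omega
  have : (l.filter (fun e => decide (e ≤ m))).length ≤ i := by
    conv_lhs => rw [hsplit]
    rw [List.filter_append, List.length_append, hnil]
    calc (List.filter _ (l.take i)).length + [].length
        ≤ (l.take i).length := by simpa using List.length_filter_le _ (l.take i)
      _ ≤ i := by simp
  omega

lemma count_ge_self (l : List ℕ) (hl : l.Pairwise (· ≤ ·)) (i : ℕ) (hi : i < l.length) (m : ℕ)
    (hm : l.get ⟨i, hi⟩ ≤ m) :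
    i + 1 ≤ (l.filter (fun e => decide (e ≤ m))).length := by
  have hsplit : l = l.take (i+1) ++ l.drop (i+1) := (List.take_append_drop _ _).symm
  have hself : (l.take (i+1)).filter (fun e => decide (e ≤ m)) = l.take (i+1) := by
    rw [List.filter_eq_self]
    intro a ha
    simp only [decide_eq_true_eq]
    obtain ⟨⟨j, hj⟩, rfl⟩ := List.mem_iff_get.mp ha
    have hjlen : j < l.length := lt_of_lt_of_le hj (by simp [List.length_take])
    have hji : j ≤ i := by simp [List.length_take] at hj; omega
    have h1 : (l.take (i+1)).get ⟨j, hj⟩ = l.get ⟨j, hjlen⟩ := by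
      simp [List.get_eq_getElem, List.getElem_take]
    rw [h1]
    have : l.get ⟨j, hjlen⟩ ≤ l.get ⟨i, hi⟩ :=
      hl.rel_get_of_le (by simpa using hji : (⟨j, hjlen⟩ : Fin l.length) ≤ ⟨i, hi⟩)
    omega
  have : (l.filter (fun e => decide (e ≤ m))).length
      = ((l.take (i+1)).filter (fun e => decide (e ≤ m))).length
        + ((l.drop (i+1)).filter (fun e => decide (e ≤ m))).length := by
    conv_lhs => rw [hsplit]
    rw [List.filter_append, List.length_append]
  rw [this, hself]
  have : (l.take (i+1)).length = i+1 := by simp [List.length_take]; omega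
  omega

lemma gale_of_count (x y : Finset ℕ)
    (h : ∀ m, (y.filter (· ≤ m)).card ≤ (x.filter (· ≤ m)).card) : GaleLE x y := by
  intro i hx hy
  apply get_le_of_count _ (Finset.pairwise_sort _ _) _ hx
  calc i + 1 ≤ ((sortedL y).filter (fun e => decide (e ≤ (sortedL y).get ⟨i, hy⟩))).length :=
        count_ge_self _ (Finset.pairwise_sort _ _) _ hy _ le_rfl
    _ = (y.filter (· ≤ (sortedL y).get ⟨i, hy⟩)).card := (card_filter_sortedL _ _).symm
    _ ≤ (x.filter (· ≤ (sortedL y).get ⟨i, hy⟩)).card := h _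
    _ = _ := card_filter_sortedL _ _


lemma swap_count (s : Finset ℕ) (a b : ℕ) (hb : b ∈ s) (ha : a ∉ s) (hab : a < b) (m : ℕ) :
    (s.filter (· ≤ m)).card ≤ (((s \ {b}) ∪ {a}).filter (· ≤ m)).card := by
  classical
  set s' := (s \ {b}) ∪ {a} with hs'
  rcases lt_or_ge m b with hmb | hbm
  · apply Finset.card_le_card
    intro x hx
    simp only [Finset.mem_filter] at hx ⊢
    refine ⟨?_, hx.2⟩
    have : x ≠ b := by rintro rfl; omega
    simp [hs', Finset.mem_sdiff, hx.1, this]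
  · have hasub : s.filter (· ≤ m) ⊆ ((s'.filter (· ≤ m)).erase a) ∪ {b} := by
      intro x hx
      simp only [Finset.mem_filter] at hx
      rcases eq_or_ne x b with rfl | hxb
      · simp
      · have hxa : x ≠ a := by rintro rfl; exact ha hx.1
        simp only [Finset.mem_union, Finset.mem_erase, Finset.mem_filter]
        exact Or.inl ⟨hxa, by simp [hs', Finset.mem_sdiff, hx.1, hxb], hx.2⟩
    have hamem : a ∈ s'.filter (· ≤ m) := by
      simp only [Finset.mem_filter]
      exact ⟨by simp [hs'], by omega⟩
    calc (s.filter (· ≤ m)).card ≤ ((s'.filter (· ≤ m)).erase a ∪ {b}).card :=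
          Finset.card_le_card hasub
      _ ≤ ((s'.filter (· ≤ m)).erase a).card + 1 := by
          simpa using Finset.card_union_le ((s'.filter (· ≤ m)).erase a) {b}
      _ = (s'.filter (· ≤ m)).card := by
          rw [Finset.card_erase_of_mem hamem]
          have : 1 ≤ (s'.filter (· ≤ m)).card := Finset.card_pos.mpr ⟨a, hamem⟩
          omega

lemma swap_mem (s : Finset ℕ) (a b : ℕ) (ha : a ∉ s) : a ∈ (s \ {b}) ∪ {a} := by simp

lemma swap_galeLT (s : Finset ℕ) (a b : ℕ) (hb : b ∈ s) (ha : a ∉ s) (hab : a < b) :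
    GaleLT ((s \ {b}) ∪ {a}) s :=
  ⟨gale_of_count _ _ (swap_count s a b hb ha hab), by
    intro hEq
    exact ha (hEq ▸ swap_mem s a b ha)⟩

lemma swap_card (s : Finset ℕ) (a b : ℕ) (hb : b ∈ s) (ha : a ∉ s) :
    ((s \ {b}) ∪ {a}).card = s.card := by
  classical
  rw [Finset.sdiff_singleton_eq_erase, Finset.union_comm, ← Finset.insert_eq,
    Finset.card_insert_of_notMem (by simp [Finset.mem_erase, ha]),
    Finset.card_erase_of_mem hb]
  have : 1 ≤ s.card := Finset.card_pos.mpr ⟨b, hb⟩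
  omega

lemma gale_trans (x y z : Finset ℕ) (hc : x.card = y.card)
    (hxy : GaleLE x y) (hyz : GaleLE y z) : GaleLE x z := by
  intro i hx hz
  have hy : i < (sortedL y).length := by
    rw [sortedL, Finset.length_sort, ← hc, ← Finset.length_sort (α := ℕ) (· ≤ ·)]
    exact hx
  exact le_trans (hxy i hx hy) (hyz i hy hz)


lemma key_lemma (X : Set (Finset ℕ)) (hm : ExchangeProp X) :
    ∀ d (A B : Finset ℕ), A ∈ X → B ∈ X → A ≠ B → A.card = B.card → (A \ B).card ≤ d →
    ¬ GaleLT B A → ∃ b ∈ B \ A, ∃ a, a ∉ B ∧ a < b ∧ (B \ {b}) ∪ {a} ∈ X := by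
  intro d
  induction d with
  | zero =>
    intro A B hA hB hne hcard hd _
    exfalso
    have : A \ B = ∅ := Finset.card_eq_zero.mp (Nat.le_zero.mp hd)
    have hsub : A ⊆ B := by
      intro x hx
      by_contra hxB
      exact absurd (Finset.mem_sdiff.mpr ⟨hx, hxB⟩) (by simp [this])
    exact hne (Finset.eq_of_subset_of_card_le hsub (le_of_eq hcard.symm))
  | succ d ih =>
    intro A B hA hB hne hcard hd hnot
    have hABne : (A \ B).Nonempty := by
      rw [Finset.sdiff_nonempty]
      intro hsub
      exact hne (Finset.eq_of_subset_of_card_le hsub (le_of_eq hcard.symm))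
    have hSne : ((A \ B) ∪ (B \ A)).Nonempty := hABne.mono Finset.subset_union_left
    obtain ⟨m, hmS, hmax⟩ : ∃ m ∈ (A \ B) ∪ (B \ A), ∀ x ∈ (A \ B) ∪ (B \ A), x ≤ m :=
      ⟨_, Finset.max'_mem _ hSne, fun x hx => Finset.le_max' _ x hx⟩
    rcases Finset.mem_union.mp hmS with hmA | hmB
    · -- m ∈ A \ B : reduce A
      obtain ⟨b', hb', hA'⟩ := hm A hA B hB m hmA
      have hb'B : b' ∈ B := (Finset.mem_sdiff.mp hb').1
      have hb'A : b' ∉ A := (Finset.mem_sdiff.mp hb').2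
      have hmA' : m ∈ A := (Finset.mem_sdiff.mp hmA).1
      have hmB' : m ∉ B := (Finset.mem_sdiff.mp hmA).2
      have hb'm : b' < m := by
        have hle : b' ≤ m := hmax _ (Finset.mem_union_right _ hb')
        have : b' ≠ m := by rintro rfl; exact hmB' hb'B
        omega
      have hgA' : GaleLT ((A \ {m}) ∪ {b'}) A := swap_galeLT A b' m hmA' hb'A hb'm
      have hcA' : ((A \ {m}) ∪ {b'}).card = A.card := swap_card A b' m hmA' hb'A
      have hA'B : (A \ {m}) ∪ {b'} ≠ B := by
        intro hEq
        exact hnot ⟨hEq ▸ hgA'.1, hne.symm⟩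
      have hnot' : ¬ GaleLT B ((A \ {m}) ∪ {b'}) := by
        rintro ⟨hle, hne'⟩
        exact hnot ⟨gale_trans B _ A (hcard.symm.trans hcA'.symm) hle hgA'.1, hne.symm⟩
      have hsd : ((A \ {m}) ∪ {b'}) \ B = (A \ B).erase m := by
        ext x
        constructor
        · intro hx
          obtain ⟨h1, hxB⟩ := Finset.mem_sdiff.mp hx
          rcases Finset.mem_union.mp h1 with h2 | h2
          · obtain ⟨hxA, hxm⟩ := Finset.mem_sdiff.mp h2
            exact Finset.mem_erase.mpr ⟨by simpa using hxm, Finset.mem_sdiff.mpr ⟨hxA, hxB⟩⟩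
          · exact absurd ((Finset.mem_singleton.mp h2) ▸ hb'B) hxB
        · intro hx
          obtain ⟨hxm, h2⟩ := Finset.mem_erase.mp hx
          obtain ⟨hxA, hxB⟩ := Finset.mem_sdiff.mp h2
          exact Finset.mem_sdiff.mpr
            ⟨Finset.mem_union_left _ (Finset.mem_sdiff.mpr ⟨hxA, Finset.notMem_singleton.mpr hxm⟩), hxB⟩
      have hd' : (((A \ {m}) ∪ {b'}) \ B).card ≤ d := by
        rw [hsd, Finset.card_erase_of_mem hmA]
        omega
      obtain ⟨b, hbBA', a, haB, hab, hC⟩ :=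
        ih _ B hA' hB hA'B (hcA'.trans hcard) hd' hnot'
      refine ⟨b, ?_, a, haB, hab, hC⟩
      have hbB : b ∈ B := (Finset.mem_sdiff.mp hbBA').1
      have hbA' : b ∉ (A \ {m}) ∪ {b'} := (Finset.mem_sdiff.mp hbBA').2
      refine Finset.mem_sdiff.mpr ⟨hbB, fun hbA => hbA' ?_⟩
      have hbm : b ≠ m := by rintro rfl; exact hmB' hbB
      simp [Finset.mem_union, Finset.mem_sdiff, hbA, hbm]
    · -- m ∈ B \ A : direct exchange
      obtain ⟨a, haAB, hC⟩ := hm B hB A hA m hmB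
      have haA : a ∈ A := (Finset.mem_sdiff.mp haAB).1
      have haB : a ∉ B := (Finset.mem_sdiff.mp haAB).2
      have hmB2 : m ∈ B := (Finset.mem_sdiff.mp hmB).1
      have hmA2 : m ∉ A := (Finset.mem_sdiff.mp hmB).2
      have ham : a < m := by
        have hle : a ≤ m := hmax _ (Finset.mem_union_left _ haAB)
        have : a ≠ m := by rintro rfl; exact hmA2 haA
        omega
      exact ⟨m, hmB, a, haB, ham, hC⟩

/-- Any linear extension of the Gale order on the set of bases of a matroid of
rank `k` on `[n]` is a shelling order. -/
theorem matroid_linear_extension_is_shelling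
    (n k h : ℕ) (X : Set (Finset ℕ))
    (hX : ∀ x ∈ X, x ⊆ Finset.Icc 1 n ∧ x.card = k)
    (hmatroid : ExchangeProp X)
    (L : Fin h → Finset ℕ)
    (hinj : Function.Injective L)
    (himg : ∀ x, x ∈ X ↔ ∃ i, L i = x)
    (hlin : ∀ i j : Fin h, GaleLT (L i) (L j) → i < j) :
    IsShellingOrder k L := by
  intro i j hij
  have hAX : L i ∈ X := (himg (L i)).mpr ⟨i, rfl⟩
  have hBX : L j ∈ X := (himg (L j)).mpr ⟨j, rfl⟩
  have hne : L i ≠ L j := fun hEq => absurd (hinj hEq) (ne_of_lt hij)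
  have hcA : (L i).card = k := (hX _ hAX).2
  have hcB : (L j).card = k := (hX _ hBX).2
  have hnot : ¬ GaleLT (L j) (L i) := fun hg => absurd (hlin j i hg) (not_lt.mpr hij.le)
  obtain ⟨b, hbBA, a, haB, hab, hC⟩ :=
    key_lemma X hmatroid ((L i \ L j).card) (L i) (L j) hAX hBX hne
      (hcA.trans hcB.symm) le_rfl hnot
  have hbB : b ∈ L j := (Finset.mem_sdiff.mp hbBA).1
  have hbA : b ∉ L i := (Finset.mem_sdiff.mp hbBA).2
  obtain ⟨z, hz⟩ := (himg _).mp hC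
  have hgC : GaleLT ((L j \ {b}) ∪ {a}) (L j) := swap_galeLT _ a b hbB haB hab
  have hzj : z < j := hlin z j (by rw [hz]; exact hgC)
  have hInt : L z ∩ L j = (L j).erase b := by
    rw [hz]
    ext x
    constructor
    · intro hx
      obtain ⟨h1, h2⟩ := Finset.mem_inter.mp hx
      rcases Finset.mem_union.mp h1 with h3 | h3
      · obtain ⟨_, hxb⟩ := Finset.mem_sdiff.mp h3
        exact Finset.mem_erase.mpr ⟨by simpa using hxb, h2⟩
      · exact absurd ((Finset.mem_singleton.mp h3) ▸ h2) haB
    · intro hx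
      obtain ⟨hxb, hxB⟩ := Finset.mem_erase.mp hx
      exact Finset.mem_inter.mpr
        ⟨Finset.mem_union_left _
          (Finset.mem_sdiff.mpr ⟨hxB, Finset.notMem_singleton.mpr hxb⟩), hxB⟩
  refine ⟨z, hzj, ?_, ?_⟩
  · rw [hInt, Finset.card_erase_of_mem hbB, hcB]
  · intro x hx
    obtain ⟨hxA, hxB⟩ := Finset.mem_inter.mp hx
    rw [hInt]
    refine Finset.mem_erase.mpr ⟨fun hEq => hbA (hEq ▸ hxA), hxB⟩
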